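/- Most-significant-bit trichotomy for multiplication overflow: for all p, q : BitVec w with w ≥ 1: (i) if Msb(p) + Msb(q) ≥ w + 2 then Ovfl×(p, q); (ii) if Msb(p) + Msb(q) ≤ w then ¬Ovfl×(p, q); (iii) if Msb(p) + Msb(q) = w + 1, then Ovfl×(p, q) holds if and only if (zeroExtend (w+1) p) · (zeroExtend (w+1) q) ≥ᵤ 2^w, where the product and comparison are taken in BitVec (w+1). -/

import Mathlib

/-- One-based index of the most significant set bit: `Msb 0 = 0` and
`Msb p = Nat.log2 p.toNat + 1` for `p ≠ 0`. -/
def Msb {w : ℕ} (p : BitVec w) : ℕ :=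
  if p = 0 then 0 else Nat.log2 p.toNat + 1

lemma Msb_lt {w : ℕ} (p : BitVec w) : p.toNat < 2 ^ Msb p := by
  unfold Msb
  split
  · simp_all
  · exact Nat.lt_log2_self

lemma Msb_le {w : ℕ} (p : BitVec w) (h : p ≠ 0) : 2 ^ (Msb p - 1) ≤ p.toNat := by
  unfold Msb
  rw [if_neg h]
  simpa using Nat.log2_self_le (fun h0 => h (by apply BitVec.eq_of_toNat_eq; simp [h0]))

lemma Msb_le_width {w : ℕ} (p : BitVec w) : Msb p ≤ w := by
  unfold Msb
  split
  · omega
  · have h0 : p.toNat ≠ 0 :=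
      fun h0 => ‹¬ p = 0#w› (by apply BitVec.eq_of_toNat_eq; simp [h0])
    have := (Nat.log2_lt h0).mpr p.isLt
    omega

/-- Most-significant-bit trichotomy for multiplication overflow. -/
theorem msb_ovfl_trichotomy (w : ℕ) (hw : 1 ≤ w) (p q : BitVec w) :
    (w + 2 ≤ Msb p + Msb q → 2 ^ w ≤ p.toNat * q.toNat) ∧
    (Msb p + Msb q ≤ w → ¬ (2 ^ w ≤ p.toNat * q.toNat)) ∧
    (Msb p + Msb q = w + 1 →
      (2 ^ w ≤ p.toNat * q.toNat ↔
        BitVec.ofNat (w + 1) (2 ^ w) ≤ p.zeroExtend (w + 1) * q.zeroExtend (w + 1))) := by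
  have hlt : p.toNat * q.toNat < 2 ^ (Msb p + Msb q) := by
    calc p.toNat * q.toNat ≤ p.toNat * 2 ^ Msb q :=
          Nat.mul_le_mul_left _ (Nat.le_of_lt (Msb_lt q))
      _ < 2 ^ Msb p * 2 ^ Msb q :=
          Nat.mul_lt_mul_of_lt_of_le (Msb_lt p) le_rfl (Nat.pow_pos (by norm_num))
      _ = 2 ^ (Msb p + Msb q) := (pow_add 2 _ _).symm
  have hge : ∀ (h : p ≠ 0) (h' : q ≠ 0),
      2 ^ (Msb p + Msb q - 2) ≤ p.toNat * q.toNat := by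
    intro h h'
    have hp := Msb_le p h
    have hq := Msb_le q h'
    have hp1 : 1 ≤ Msb p := by unfold Msb; rw [if_neg h]; omega
    have hq1 : 1 ≤ Msb q := by unfold Msb; rw [if_neg h']; omega
    calc 2 ^ (Msb p + Msb q - 2) = 2 ^ (Msb p - 1) * 2 ^ (Msb q - 1) := by
          rw [← pow_add]; congr 1; omega
      _ ≤ p.toNat * q.toNat := Nat.mul_le_mul hp hq
  refine ⟨?_, ?_, ?_⟩
  · intro h
    have hp : p ≠ 0 := by
      rintro rfl
      have h0 : Msb (0 : BitVec w) = 0 := by simp [Msb]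
      have := Msb_le_width q; omega
    have hq : q ≠ 0 := by
      rintro rfl
      have h0 : Msb (0 : BitVec w) = 0 := by simp [Msb]
      have := Msb_le_width p; omega
    have := hge hp hq
    calc 2 ^ w ≤ 2 ^ (Msb p + Msb q - 2) := Nat.pow_le_pow_right (by norm_num) (by omega)
      _ ≤ p.toNat * q.toNat := this
  · intro h hcon
    have : p.toNat * q.toNat < 2 ^ w :=
      lt_of_lt_of_le hlt (Nat.pow_le_pow_right (by norm_num) h)
    omega
  · intro h
    have hfit : p.toNat * q.toNat < 2 ^ (w + 1) := by
      rw [← h]; exact hlt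
    have hle : BitVec.ofNat (w + 1) (2 ^ w) ≤ p.zeroExtend (w + 1) * q.zeroExtend (w + 1)
        ↔ 2 ^ w ≤ p.toNat * q.toNat := by
      rw [BitVec.le_def]
      simp [BitVec.toNat_mul, Nat.mod_eq_of_lt hfit,
        Nat.mod_eq_of_lt (show 2 ^ w < 2 ^ (w + 1) by
          exact Nat.pow_lt_pow_right (by norm_num) (by omega)),
        Nat.mod_eq_of_lt (show p.toNat < 2 ^ (w + 1) from
          lt_of_lt_of_le p.isLt (Nat.pow_le_pow_right (by norm_num) (by omega))),
        Nat.mod_eq_of_lt (show q.toNat < 2 ^ (w + 1) from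
          lt_of_lt_of_le q.isLt (Nat.pow_le_pow_right (by norm_num) (by omega)))]
      rw [Nat.mod_eq_of_lt (show 2 < 2 ^ (w + 1) from
          lt_of_lt_of_le (show 2 < 2 ^ 2 by norm_num) (Nat.pow_le_pow_right (by norm_num) (by omega))),
        Nat.mod_eq_of_lt (show 2 ^ w < 2 ^ (w + 1) by
          exact Nat.pow_lt_pow_right (by norm_num) (by omega))]
    exact hle.symm
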